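/- Exact temporal aggregation under cluster-constant inputs: consider a consecutive clustering such that F_{g,t} = F̂_{g,k} and D_t = D̂_k for every k and every t ∈ T_k, and such that the last cluster is a singleton (|T_{K−1}| = 1). If z* is an optimal solution of the full-scale GEP model and ẑ* is an optimal solution of the temporally aggregated GEP model, then the optimal objective values coincide: Ĵ(ẑ*) = J(z*). -/

import Mathlib

open Finset

/-- Data of the full-scale GEP model. -/
structure GEPData (G N : Type) where
  /-- sampling time Δ (h) -/
  delta : ℝ
  /-- capacity factors F_{g,t} -/
  F : G → ℕ → ℝ
  /-- energy demand D_t -/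
  D : ℕ → ℝ
  /-- operational cost of generator g -/
  Cpg : G → ℝ
  /-- charging cost of storage n -/
  Cpc : N → ℝ
  /-- discharging cost of storage n -/
  Cpd : N → ℝ
  /-- cost of non-supplied energy -/
  Cns : ℝ
  /-- investment cost of generator g -/
  Cginv : G → ℝ
  /-- investment cost of storage n -/
  Csinv : N → ℝ
  /-- charging efficiency -/
  etac : N → ℝ
  /-- discharging efficiency -/
  etad : N → ℝ
  /-- energy-to-power ratio -/
  Tn : N → ℝ
  /-- initial stored energy -/
  E0 : N → ℝ
  /-- minimum generator capacity -/
  Xgl : G → ℝ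
  /-- maximum generator capacity -/
  Xgu : G → ℝ
  /-- minimum storage capacity -/
  Xsl : N → ℝ
  /-- maximum storage capacity -/
  Xsu : N → ℝ

/-- Decision variables of the (full-scale or aggregated) GEP model; time-indexed
variables are functions on ℕ, constrained only on the relevant horizon. -/
structure GEPVars (G N : Type) where
  xg : G → ℝ
  xs : N → ℝ
  bg : G → ℝ
  bs : N → ℝ
  pg : G → ℕ → ℝ
  es : N → ℕ → ℝ
  pc : N → ℕ → ℝ
  pd : N → ℕ → ℝ
  ens : ℕ → ℝ

/-- Feasibility for the full-scale GEP model over horizon {0,…,T−1}. -/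
def Feasible {G N : Type} [Fintype G] [Fintype N]
    (d : GEPData G N) (T : ℕ) (z : GEPVars G N) : Prop :=
  (∀ g, z.bg g = 0 ∨ z.bg g = 1) ∧
  (∀ n, z.bs n = 0 ∨ z.bs n = 1) ∧
  (∀ t < T, ∑ g : G, z.pg g t * d.delta
      + ∑ n : N, (z.pd n t - z.pc n t) * d.delta + z.ens t = d.D t) ∧
  (∀ n, ∀ t, t + 1 < T →
      z.es n (t + 1) = z.es n t
        + (d.etac n * z.pc n t - d.etad n * z.pd n t) * d.delta) ∧
  (∀ n, z.es n 0 = d.E0 n) ∧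
  (∀ g, ∀ t < T, 0 ≤ z.pg g t ∧ z.pg g t ≤ d.F g t * z.xg g) ∧
  (∀ n, ∀ t < T, 0 ≤ z.es n t ∧ z.es n t ≤ z.xs n * d.delta) ∧
  (∀ n, ∀ t < T, 0 ≤ z.pc n t ∧ z.pc n t ≤ z.xs n * d.delta / d.Tn n) ∧
  (∀ n, ∀ t < T, 0 ≤ z.pd n t ∧ z.pd n t ≤ z.xs n * d.delta / d.Tn n) ∧
  (∀ n, z.bs n * d.Xsl n ≤ z.xs n ∧ z.xs n ≤ z.bs n * d.Xsu n) ∧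
  (∀ g, z.bg g * d.Xgl g ≤ z.xg g ∧ z.xg g ≤ z.bg g * d.Xgu g) ∧
  (∀ t < T, 0 ≤ z.ens t)

/-- Objective function J of the full-scale GEP model. -/
noncomputable def objJ {G N : Type} [Fintype G] [Fintype N]
    (d : GEPData G N) (T : ℕ) (z : GEPVars G N) : ℝ :=
  ∑ g : G, d.Cginv g * z.xg g + ∑ n : N, d.Csinv n * z.xs n
    + ∑ t ∈ Finset.range T, ∑ g : G, d.Cpg g * z.pg g t * d.delta
    + ∑ t ∈ Finset.range T,
        (∑ n : N, (d.Cpc n * z.pc n t + d.Cpd n * z.pd n t) * d.delta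
          + d.Cns * z.ens t)

/-- A consecutive clustering (partition of {0,…,T−1} into K nonempty intervals of
consecutive indices), encoded by the first indices `start k` of the clusters. -/
structure ConsecClustering (T K : ℕ) where
  start : ℕ → ℕ
  start_zero : start 0 = 0
  start_last : start K = T
  start_lt : ∀ k < K, start k < start (k + 1)

/-- Number of time steps T_k in cluster k. -/
def ConsecClustering.Tk {T K : ℕ} (c : ConsecClustering T K) (k : ℕ) : ℕ :=
  c.start (k + 1) - c.start k

/-- The set of (consecutive) time steps assigned to cluster k. -/
def ConsecClustering.cluster {T K : ℕ} (c : ConsecClustering T K) (k : ℕ) :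
    Finset ℕ :=
  Finset.Ico (c.start k) (c.start (k + 1))

/-- Aggregated capacity factor F̂_{g,k}. -/
noncomputable def Fhat {G N : Type} (d : GEPData G N) {T K : ℕ} (c : ConsecClustering T K)
    (g : G) (k : ℕ) : ℝ :=
  (∑ t ∈ c.cluster k, d.F g t) / (c.Tk k : ℝ)

/-- Aggregated demand D̂_k. -/
noncomputable def Dhat {G N : Type} (d : GEPData G N) {T K : ℕ} (c : ConsecClustering T K)
    (k : ℕ) : ℝ :=
  (∑ t ∈ c.cluster k, d.D t) / (c.Tk k : ℝ)

/-- Feasibility for the temporally aggregated GEP model over clusters {0,…,K−1}. -/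
def AggFeasible {G N : Type} [Fintype G] [Fintype N]
    (d : GEPData G N) {T K : ℕ} (c : ConsecClustering T K) (z : GEPVars G N) :
    Prop :=
  (∀ g, z.bg g = 0 ∨ z.bg g = 1) ∧
  (∀ n, z.bs n = 0 ∨ z.bs n = 1) ∧
  (∀ k < K, ∑ g : G, z.pg g k * d.delta
      + ∑ n : N, (z.pd n k - z.pc n k) * d.delta + z.ens k = Dhat d c k) ∧
  (∀ n, ∀ k, k + 1 < K →
      z.es n (k + 1) = z.es n k
        + (d.etac n * z.pc n k - d.etad n * z.pd n k) * (c.Tk k : ℝ) * d.delta) ∧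
  (∀ n, z.es n 0 = d.E0 n) ∧
  (∀ g, ∀ k < K, 0 ≤ z.pg g k ∧ z.pg g k ≤ Fhat d c g k * z.xg g) ∧
  (∀ n, ∀ k < K, 0 ≤ z.es n k ∧ z.es n k ≤ z.xs n * d.delta) ∧
  (∀ n, ∀ k < K, 0 ≤ z.pc n k ∧ z.pc n k ≤ z.xs n * d.delta / d.Tn n) ∧
  (∀ n, ∀ k < K, 0 ≤ z.pd n k ∧ z.pd n k ≤ z.xs n * d.delta / d.Tn n) ∧
  (∀ n, z.bs n * d.Xsl n ≤ z.xs n ∧ z.xs n ≤ z.bs n * d.Xsu n) ∧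
  (∀ g, z.bg g * d.Xgl g ≤ z.xg g ∧ z.xg g ≤ z.bg g * d.Xgu g) ∧
  (∀ k < K, 0 ≤ z.ens k)

/-- Objective function Ĵ of the temporally aggregated GEP model. -/
noncomputable def objJagg {G N : Type} [Fintype G] [Fintype N]
    (d : GEPData G N) {T K : ℕ} (c : ConsecClustering T K) (z : GEPVars G N) :
    ℝ :=
  ∑ g : G, d.Cginv g * z.xg g + ∑ n : N, d.Csinv n * z.xs n
    + ∑ k ∈ Finset.range K, (c.Tk k : ℝ) *
        (∑ g : G, d.Cpg g * z.pg g k * d.delta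
          + ∑ n : N, (d.Cpc n * z.pc n k + d.Cpd n * z.pd n k) * d.delta
          + d.Cns * z.ens k)

/-- The aggregation ẑ of a full-scale assignment z: investment variables are kept,
time-indexed operational variables are averaged over each cluster, and the stored
energy is sampled at the first index of each cluster. -/
noncomputable def aggregate {G N : Type} {T K : ℕ} (c : ConsecClustering T K)
    (z : GEPVars G N) : GEPVars G N where
  xg := z.xg
  xs := z.xs
  bg := z.bg
  bs := z.bs
  pg := fun g k => (∑ t ∈ c.cluster k, z.pg g t) / (c.Tk k : ℝ)
  es := fun n k => z.es n (c.start k)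
  pc := fun n k => (∑ t ∈ c.cluster k, z.pc n t) / (c.Tk k : ℝ)
  pd := fun n k => (∑ t ∈ c.cluster k, z.pd n t) / (c.Tk k : ℝ)
  ens := fun k => (∑ t ∈ c.cluster k, z.ens t) / (c.Tk k : ℝ)

namespace ConsecClustering

lemma start_mono {T K : ℕ} (c : ConsecClustering T K) {k l : ℕ} (hkl : k ≤ l) (hl : l ≤ K) :
    c.start k ≤ c.start l := by
  induction l with
  | zero => simp [Nat.le_zero.mp hkl]
  | succ l ih =>
    rcases Nat.lt_or_ge k (l + 1) with h | h
    · exact le_trans (ih (Nat.lt_succ_iff.mp h) (le_trans (Nat.le_succ l) hl))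
        (le_of_lt (c.start_lt l (lt_of_lt_of_le (Nat.lt_succ_self l) hl)))
    · have : k = l + 1 := le_antisymm hkl h
      simp [this]

lemma start_strictmono {T K : ℕ} (c : ConsecClustering T K) {k l : ℕ} (hkl : k < l)
    (hl : l ≤ K) : c.start k < c.start l :=
  lt_of_lt_of_le (c.start_lt k (lt_of_lt_of_le hkl hl)) (c.start_mono hkl hl)

lemma start_le_T {T K : ℕ} (c : ConsecClustering T K) {k : ℕ} (hk : k ≤ K) :
    c.start k ≤ T := by
  have := c.start_mono hk le_rfl
  rwa [c.start_last] at this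

lemma Tk_pos {T K : ℕ} (c : ConsecClustering T K) {k : ℕ} (hk : k < K) : 0 < c.Tk k :=
  Nat.sub_pos_of_lt (c.start_lt k hk)

lemma Tk_cast_pos {T K : ℕ} (c : ConsecClustering T K) {k : ℕ} (hk : k < K) :
    (0 : ℝ) < (c.Tk k : ℝ) := by exact_mod_cast c.Tk_pos hk

lemma card_cluster {T K : ℕ} (c : ConsecClustering T K) (k : ℕ) :
    (c.cluster k).card = c.Tk k := Nat.card_Ico _ _

lemma mem_cluster_lt_T {T K : ℕ} (c : ConsecClustering T K) {k t : ℕ} (hk : k < K)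
    (ht : t ∈ c.cluster k) : t < T := by
  rw [cluster, Finset.mem_Ico] at ht
  exact lt_of_lt_of_le ht.2 (c.start_le_T hk)

/-- Index of the cluster containing t. -/
def cidx {T K : ℕ} (c : ConsecClustering T K) (t : ℕ) : ℕ :=
  Nat.findGreatest (fun k => c.start k ≤ t) K

lemma cidx_le {T K : ℕ} (c : ConsecClustering T K) (t : ℕ) : c.cidx t ≤ K :=
  Nat.findGreatest_le K

lemma start_cidx_le {T K : ℕ} (c : ConsecClustering T K) (t : ℕ) :
    c.start (c.cidx t) ≤ t :=
  Nat.findGreatest_spec (P := fun k => c.start k ≤ t) (Nat.zero_le K)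
    (by simp [c.start_zero])

lemma cidx_lt {T K : ℕ} (c : ConsecClustering T K) {t : ℕ} (ht : t < T) :
    c.cidx t < K := by
  rcases lt_or_eq_of_le (c.cidx_le t) with h | h
  · exact h
  · exfalso
    have := c.start_cidx_le t
    rw [h, c.start_last] at this
    omega

lemma lt_start_cidx_succ {T K : ℕ} (c : ConsecClustering T K) {t : ℕ} (ht : t < T) :
    t < c.start (c.cidx t + 1) := by
  by_contra h
  push_neg at h
  have h1 : c.cidx t + 1 ≤ K := c.cidx_lt ht
  have h2 : c.cidx t + 1 ≤ c.cidx t := Nat.le_findGreatest h1 h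
  omega

lemma mem_cluster_cidx {T K : ℕ} (c : ConsecClustering T K) {t : ℕ} (ht : t < T) :
    t ∈ c.cluster (c.cidx t) := by
  rw [cluster, Finset.mem_Ico]
  exact ⟨c.start_cidx_le t, c.lt_start_cidx_succ ht⟩

lemma cidx_eq {T K : ℕ} (c : ConsecClustering T K) {k t : ℕ} (hk : k < K)
    (ht : t ∈ c.cluster k) : c.cidx t = k := by
  rw [cluster, Finset.mem_Ico] at ht
  have hT : t < T := lt_of_lt_of_le ht.2 (c.start_le_T hk)
  have h1 : k ≤ c.cidx t := Nat.le_findGreatest (le_of_lt hk) ht.1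
  have h2 : c.cidx t ≤ k := by
    by_contra h
    push_neg at h
    have : c.start (k + 1) ≤ c.start (c.cidx t) := c.start_mono h (c.cidx_le t)
    have := c.start_cidx_le t
    omega
  omega

lemma sum_clusters {T K : ℕ} (c : ConsecClustering T K) (f : ℕ → ℝ) :
    ∑ k ∈ Finset.range K, ∑ t ∈ c.cluster k, f t = ∑ t ∈ Finset.range T, f t := by
  have H : ∀ m, m ≤ K →
      ∑ k ∈ Finset.range m, ∑ t ∈ c.cluster k, f t
        = ∑ t ∈ Finset.Ico 0 (c.start m), f t := by
    intro m
    induction m with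
    | zero => simp [c.start_zero]
    | succ m ih =>
      intro hm
      rw [Finset.sum_range_succ, ih (by omega), cluster]
      exact Finset.sum_Ico_consecutive f (Nat.zero_le _) (c.start_mono (Nat.le_succ m) hm)
  have := H K le_rfl
  rw [this, c.start_last, Finset.range_eq_Ico]

end ConsecClustering

lemma telescope (e g : ℕ → ℝ) (T : ℕ)
    (h : ∀ t, t + 1 < T → e (t + 1) = e t + g t) :
    ∀ a b, a ≤ b → b < T → e b = e a + ∑ t ∈ Finset.Ico a b, g t := by
  intro a b hab hbT
  induction b with
  | zero =>
    have : a = 0 := Nat.le_zero.mp hab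
    simp [this]
  | succ b ih =>
    rcases lt_or_eq_of_le hab with hab' | hab'
    · have hab'' : a ≤ b := Nat.lt_succ_iff.mp hab'
      rw [h b hbT, ih hab'' (by omega), Finset.sum_Ico_succ_top hab'']
      ring
    · simp [← hab']
open ConsecClustering in
lemma agg_feasible {G N : Type} [Fintype G] [Fintype N] (d : GEPData G N) {T K : ℕ}
    (hdelta : 0 < d.delta) (hTn : ∀ n, 0 < d.Tn n)
    (c : ConsecClustering T K)
    (hF : ∀ g, ∀ k < K, ∀ t ∈ c.cluster k, d.F g t = Fhat d c g k)
    (hD : ∀ k < K, ∀ t ∈ c.cluster k, d.D t = Dhat d c k)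
    (z : GEPVars G N) (hz : Feasible d T z) :
    AggFeasible d c (aggregate c z) := by
  obtain ⟨hbg, hbs, hbal, hdyn, hE0, hpg, hes, hpc, hpd, hxs, hxg, hens⟩ := hz
  refine ⟨hbg, hbs, ?_, ?_, ?_, ?_, ?_, ?_, ?_, hxs, hxg, ?_⟩
  · -- balance
    intro k hk
    have hTk : (0 : ℝ) < (c.Tk k : ℝ) := c.Tk_cast_pos hk
    have hsum : ∑ t ∈ c.cluster k,
        (∑ g : G, z.pg g t * d.delta + ∑ n : N, (z.pd n t - z.pc n t) * d.delta + z.ens t)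
        = ∑ t ∈ c.cluster k, d.D t :=
      Finset.sum_congr rfl fun t ht => hbal t (c.mem_cluster_lt_T hk ht)
    show ∑ g : G, (∑ t ∈ c.cluster k, z.pg g t) / (c.Tk k : ℝ) * d.delta
        + ∑ n : N, ((∑ t ∈ c.cluster k, z.pd n t) / (c.Tk k : ℝ)
            - (∑ t ∈ c.cluster k, z.pc n t) / (c.Tk k : ℝ)) * d.delta
        + (∑ t ∈ c.cluster k, z.ens t) / (c.Tk k : ℝ) = Dhat d c k
    have key : ∑ t ∈ c.cluster k,
        (∑ g : G, z.pg g t * d.delta + ∑ n : N, (z.pd n t - z.pc n t) * d.delta + z.ens t)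
        = ∑ g : G, (∑ t ∈ c.cluster k, z.pg g t) * d.delta
          + ∑ n : N, (∑ t ∈ c.cluster k, z.pd n t - ∑ t ∈ c.cluster k, z.pc n t) * d.delta
          + ∑ t ∈ c.cluster k, z.ens t := by
      simp only [Finset.sum_add_distrib, Finset.sum_mul, Finset.sum_sub_distrib, sub_mul]
      rw [Finset.sum_comm (s := c.cluster k) (t := (Finset.univ : Finset G)),
        Finset.sum_comm (s := c.cluster k) (t := (Finset.univ : Finset N))
          (f := fun t n => z.pd n t * d.delta),
        Finset.sum_comm (s := c.cluster k) (t := (Finset.univ : Finset N))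
          (f := fun t n => z.pc n t * d.delta)]
    rw [Dhat, ← hsum, key]
    simp only [div_mul_eq_mul_div, div_sub_div_same, ← Finset.sum_div, ← add_div]
  · -- dynamics
    intro n k hk1
    have hk : k < K := by omega
    have hTk : (0 : ℝ) < (c.Tk k : ℝ) := c.Tk_cast_pos hk
    have hb : c.start (k + 1) < T := by
      have h1 := c.start_strictmono (by omega : k + 1 < k + 2) (by omega : k + 2 ≤ K)
      have h2 := c.start_le_T (by omega : k + 2 ≤ K)
      omega
    have ha : c.start k ≤ c.start (k + 1) := le_of_lt (c.start_lt k hk)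
    have htel := telescope (z.es n)
      (fun t => (d.etac n * z.pc n t - d.etad n * z.pd n t) * d.delta) T
      (fun t ht => hdyn n t ht) (c.start k) (c.start (k + 1)) ha hb
    show z.es n (c.start (k + 1)) = z.es n (c.start k)
        + (d.etac n * ((∑ t ∈ c.cluster k, z.pc n t) / (c.Tk k : ℝ))
            - d.etad n * ((∑ t ∈ c.cluster k, z.pd n t) / (c.Tk k : ℝ)))
          * (c.Tk k : ℝ) * d.delta
    rw [htel]
    congr 1
    rw [ConsecClustering.cluster]
    field_simp
    simp only [Finset.sum_mul, Finset.mul_sum, Finset.sum_sub_distrib, sub_mul]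
    rw [← Finset.sum_mul, ← Finset.sum_mul]
    ring
  · -- E0
    intro n
    show z.es n (c.start 0) = d.E0 n
    rw [c.start_zero]; exact hE0 n
  · -- pg bounds
    intro g k hk
    have hTk : (0 : ℝ) < (c.Tk k : ℝ) := c.Tk_cast_pos hk
    dsimp only [aggregate]
    constructor
    · exact div_nonneg (Finset.sum_nonneg fun t ht =>
        (hpg g t (c.mem_cluster_lt_T hk ht)).1) hTk.le
    · rw [div_le_iff₀ hTk]
      calc ∑ t ∈ c.cluster k, z.pg g t
          ≤ ∑ t ∈ c.cluster k, Fhat d c g k * z.xg g := by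
            refine Finset.sum_le_sum fun t ht => ?_
            have := (hpg g t (c.mem_cluster_lt_T hk ht)).2
            rwa [hF g k hk t ht] at this
        _ = Fhat d c g k * z.xg g * (c.Tk k : ℝ) := by
            rw [Finset.sum_const, c.card_cluster, nsmul_eq_mul, mul_comm]
  · -- es bounds
    intro n k hk
    have hkT : c.start k < T :=
      lt_of_lt_of_le (c.start_lt k hk) (c.start_le_T hk)
    exact hes n (c.start k) hkT
  · -- pc bounds
    intro n k hk
    have hTk : (0 : ℝ) < (c.Tk k : ℝ) := c.Tk_cast_pos hk
    dsimp only [aggregate]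
    constructor
    · exact div_nonneg (Finset.sum_nonneg fun t ht =>
        (hpc n t (c.mem_cluster_lt_T hk ht)).1) hTk.le
    · rw [div_le_iff₀ hTk]
      calc ∑ t ∈ c.cluster k, z.pc n t
          ≤ ∑ t ∈ c.cluster k, z.xs n * d.delta / d.Tn n :=
            Finset.sum_le_sum fun t ht => (hpc n t (c.mem_cluster_lt_T hk ht)).2
        _ = z.xs n * d.delta / d.Tn n * (c.Tk k : ℝ) := by
            rw [Finset.sum_const, c.card_cluster, nsmul_eq_mul, mul_comm]
  · -- pd bounds
    intro n k hk
    have hTk : (0 : ℝ) < (c.Tk k : ℝ) := c.Tk_cast_pos hk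
    dsimp only [aggregate]
    constructor
    · exact div_nonneg (Finset.sum_nonneg fun t ht =>
        (hpd n t (c.mem_cluster_lt_T hk ht)).1) hTk.le
    · rw [div_le_iff₀ hTk]
      calc ∑ t ∈ c.cluster k, z.pd n t
          ≤ ∑ t ∈ c.cluster k, z.xs n * d.delta / d.Tn n :=
            Finset.sum_le_sum fun t ht => (hpd n t (c.mem_cluster_lt_T hk ht)).2
        _ = z.xs n * d.delta / d.Tn n * (c.Tk k : ℝ) := by
            rw [Finset.sum_const, c.card_cluster, nsmul_eq_mul, mul_comm]
  · -- ens nonneg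
    intro k hk
    exact div_nonneg (Finset.sum_nonneg fun t ht =>
      hens t (c.mem_cluster_lt_T hk ht)) (c.Tk_cast_pos hk).le
open ConsecClustering in
lemma agg_obj {G N : Type} [Fintype G] [Fintype N] (d : GEPData G N) {T K : ℕ}
    (c : ConsecClustering T K) (z : GEPVars G N) :
    objJagg d c (aggregate c z) = objJ d T z := by
  rw [objJagg, objJ]
  have hop : ∀ k ∈ Finset.range K,
      (c.Tk k : ℝ) * (∑ g : G, d.Cpg g * (aggregate c z).pg g k * d.delta
        + ∑ n : N, (d.Cpc n * (aggregate c z).pc n k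
            + d.Cpd n * (aggregate c z).pd n k) * d.delta
        + d.Cns * (aggregate c z).ens k)
      = ∑ t ∈ c.cluster k, (∑ g : G, d.Cpg g * z.pg g t * d.delta
          + (∑ n : N, (d.Cpc n * z.pc n t + d.Cpd n * z.pd n t) * d.delta
            + d.Cns * z.ens t)) := by
    intro k hk
    rw [Finset.mem_range] at hk
    have hTk : (0 : ℝ) < (c.Tk k : ℝ) := c.Tk_cast_pos hk
    dsimp only [aggregate]
    simp only [mul_div_assoc', div_mul_eq_mul_div, ← add_div, ← Finset.sum_div]
    rw [mul_div_cancel_left₀ _ hTk.ne']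
    simp only [add_mul, Finset.sum_add_distrib, Finset.mul_sum, Finset.sum_mul]
    rw [Finset.sum_comm (s := c.cluster k) (t := (Finset.univ : Finset G)),
      Finset.sum_comm (s := c.cluster k) (t := (Finset.univ : Finset N))
        (f := fun t n => d.Cpc n * z.pc n t * d.delta),
      Finset.sum_comm (s := c.cluster k) (t := (Finset.univ : Finset N))
        (f := fun t n => d.Cpd n * z.pd n t * d.delta)]
    ring
  rw [Finset.sum_congr rfl hop, c.sum_clusters]
  simp only [Finset.sum_add_distrib]
  dsimp only [aggregate]
  ring
open ConsecClustering in
/-- Disaggregation of an aggregated assignment: piecewise-constant operational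
variables and piecewise-linear stored energy. -/
noncomputable def disagg {G N : Type} {T K : ℕ} (d : GEPData G N)
    (c : ConsecClustering T K) (w : GEPVars G N) : GEPVars G N where
  xg := w.xg
  xs := w.xs
  bg := w.bg
  bs := w.bs
  pg := fun g t => w.pg g (c.cidx t)
  es := fun n t => w.es n (c.cidx t)
    + (d.etac n * w.pc n (c.cidx t) - d.etad n * w.pd n (c.cidx t))
      * ((t - c.start (c.cidx t) : ℕ) : ℝ) * d.delta
  pc := fun n t => w.pc n (c.cidx t)
  pd := fun n t => w.pd n (c.cidx t)
  ens := fun t => w.ens (c.cidx t)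

open ConsecClustering in
lemma disagg_feasible {G N : Type} [Fintype G] [Fintype N] (d : GEPData G N) {T K : ℕ}
    (hK : 1 ≤ K) (c : ConsecClustering T K)
    (hF : ∀ g, ∀ k < K, ∀ t ∈ c.cluster k, d.F g t = Fhat d c g k)
    (hD : ∀ k < K, ∀ t ∈ c.cluster k, d.D t = Dhat d c k)
    (hlast : c.Tk (K - 1) = 1)
    (w : GEPVars G N) (hw : AggFeasible d c w) :
    Feasible d T (disagg d c w) := by
  obtain ⟨hbg, hbs, hbal, hdyn, hE0, hpg, hes, hpc, hpd, hxs, hxg, hens⟩ := hw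
  refine ⟨hbg, hbs, ?_, ?_, ?_, ?_, ?_, ?_, ?_, hxs, hxg, ?_⟩
  · -- balance
    intro t ht
    have hk : c.cidx t < K := c.cidx_lt ht
    have := hbal (c.cidx t) hk
    dsimp only [disagg]
    rw [hD (c.cidx t) hk t (c.mem_cluster_cidx ht)]
    exact this
  · -- dynamics
    intro n t ht
    have htT : t < T := by omega
    set k := c.cidx t with hkdef
    have hk : k < K := c.cidx_lt htT
    have h1 : c.start k ≤ t := c.start_cidx_le t
    have h2 : t < c.start (k + 1) := c.lt_start_cidx_succ htT
    dsimp only [disagg]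
    rcases lt_or_eq_of_le (show t + 1 ≤ c.start (k + 1) by omega) with hcase | hcase
    · -- t+1 in the same cluster
      have hidx : c.cidx (t + 1) = k := by
        apply c.cidx_eq hk
        rw [ConsecClustering.cluster, Finset.mem_Ico]
        exact ⟨le_trans h1 (Nat.le_succ t), hcase⟩
      rw [hidx]
      have hsub : t + 1 - c.start k = (t - c.start k) + 1 := by omega
      rw [hsub]
      push_cast
      ring
    · -- t+1 is the start of the next cluster
      have hk1 : k + 1 < K := by
        by_contra h
        push_neg at h
        have hkK : k + 1 = K := by omega
        have : c.start (k + 1) = T := by rw [hkK, c.start_last]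
        omega
      have hidx : c.cidx (t + 1) = k + 1 := by
        apply c.cidx_eq hk1
        rw [ConsecClustering.cluster, Finset.mem_Ico]
        have h3 := c.start_lt (k + 1) hk1
        omega
      rw [hidx]
      have hz1 : t + 1 - c.start (k + 1) = 0 := by omega
      have hz2 : t - c.start k = c.Tk k - 1 := by
        have := c.start_lt k hk
        rw [ConsecClustering.Tk]; omega
      have hTk1 : 1 ≤ c.Tk k := c.Tk_pos hk
      rw [hz1, hz2, hdyn n k hk1]
      have : ((c.Tk k - 1 : ℕ) : ℝ) = (c.Tk k : ℝ) - 1 := by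
        push_cast [hTk1]; ring
      rw [this]
      push_cast
      ring
  · -- E0
    intro n
    have h0 : c.cidx 0 = 0 := by
      apply c.cidx_eq hK
      rw [ConsecClustering.cluster, Finset.mem_Ico, c.start_zero]
      exact ⟨le_rfl, by have h := c.start_lt 0 hK; rwa [c.start_zero] at h⟩
    dsimp only [disagg]
    rw [h0, c.start_zero]
    simp [hE0 n]
  · -- pg bounds
    intro g t ht
    have hk : c.cidx t < K := c.cidx_lt ht
    have := hpg g (c.cidx t) hk
    dsimp only [disagg]
    rw [hF g (c.cidx t) hk t (c.mem_cluster_cidx ht)]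
    exact this
  · -- es bounds
    intro n t ht
    have hk : c.cidx t < K := c.cidx_lt ht
    set k := c.cidx t with hkdef
    have h1 : c.start k ≤ t := c.start_cidx_le t
    have h2 : t < c.start (k + 1) := c.lt_start_cidx_succ ht
    have hj : t - c.start k < c.Tk k := by rw [ConsecClustering.Tk]; omega
    dsimp only [disagg]
    rcases lt_or_eq_of_le (Nat.succ_le_of_lt hk) with hk1 | hk1
    · -- interior cluster: convex combination
      have hdynk := hdyn n k hk1
      have ha := hes n k hk
      have hb := hes n (k + 1) hk1
      have hTk : (0 : ℝ) < (c.Tk k : ℝ) := c.Tk_cast_pos hk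
      have hjle : ((t - c.start k : ℕ) : ℝ) ≤ (c.Tk k : ℝ) := by
        exact_mod_cast le_of_lt hj
      have hjnn : (0 : ℝ) ≤ ((t - c.start k : ℕ) : ℝ) := Nat.cast_nonneg _
      have key : (d.etac n * w.pc n k - d.etad n * w.pd n k) * d.delta * (c.Tk k : ℝ)
          = w.es n (k + 1) - w.es n k := by rw [hdynk]; ring
      constructor
      · nlinarith [mul_nonneg (sub_nonneg.mpr hjle) ha.1,
          mul_nonneg hjnn hb.1]
      · nlinarith [mul_nonneg (sub_nonneg.mpr hjle)
            (sub_nonneg.mpr ha.2),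
          mul_nonneg hjnn (sub_nonneg.mpr hb.2)]
    · -- last cluster is a singleton
      have hklast : k = K - 1 := by omega
      have hTk1 : c.Tk k = 1 := by rw [hklast]; exact hlast
      have hj0 : t - c.start k = 0 := by omega
      rw [hj0]
      simpa using hes n k hk
  · -- pc bounds
    intro n t ht
    exact hpc n (c.cidx t) (c.cidx_lt ht)
  · -- pd bounds
    intro n t ht
    exact hpd n (c.cidx t) (c.cidx_lt ht)
  · -- ens nonneg
    intro t ht
    exact hens (c.cidx t) (c.cidx_lt ht)
open ConsecClustering in
lemma disagg_obj {G N : Type} [Fintype G] [Fintype N] (d : GEPData G N) {T K : ℕ}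
    (c : ConsecClustering T K) (w : GEPVars G N) :
    objJ d T (disagg d c w) = objJagg d c w := by
  rw [objJ, objJagg]
  dsimp only [disagg]
  rw [← c.sum_clusters (fun t => ∑ g : G, d.Cpg g * w.pg g (c.cidx t) * d.delta),
    ← c.sum_clusters (fun t => ∑ n : N,
        (d.Cpc n * w.pc n (c.cidx t) + d.Cpd n * w.pd n (c.cidx t)) * d.delta
      + d.Cns * w.ens (c.cidx t))]
  have h1 : ∀ k ∈ Finset.range K,
      (∑ t ∈ c.cluster k, ∑ g : G, d.Cpg g * w.pg g (c.cidx t) * d.delta)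
        = (c.Tk k : ℝ) * ∑ g : G, d.Cpg g * w.pg g k * d.delta := by
    intro k hk
    rw [Finset.mem_range] at hk
    calc ∑ t ∈ c.cluster k, ∑ g : G, d.Cpg g * w.pg g (c.cidx t) * d.delta
        = ∑ t ∈ c.cluster k, ∑ g : G, d.Cpg g * w.pg g k * d.delta :=
          Finset.sum_congr rfl fun t ht => by rw [c.cidx_eq hk ht]
      _ = (c.Tk k : ℝ) * ∑ g : G, d.Cpg g * w.pg g k * d.delta := by
          rw [Finset.sum_const, c.card_cluster, nsmul_eq_mul]
  have h2 : ∀ k ∈ Finset.range K,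
      (∑ t ∈ c.cluster k, (∑ n : N,
          (d.Cpc n * w.pc n (c.cidx t) + d.Cpd n * w.pd n (c.cidx t)) * d.delta
        + d.Cns * w.ens (c.cidx t)))
        = (c.Tk k : ℝ) * (∑ n : N,
            (d.Cpc n * w.pc n k + d.Cpd n * w.pd n k) * d.delta
          + d.Cns * w.ens k) := by
    intro k hk
    rw [Finset.mem_range] at hk
    calc ∑ t ∈ c.cluster k, (∑ n : N,
            (d.Cpc n * w.pc n (c.cidx t) + d.Cpd n * w.pd n (c.cidx t)) * d.delta
          + d.Cns * w.ens (c.cidx t))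
        = ∑ t ∈ c.cluster k, (∑ n : N,
            (d.Cpc n * w.pc n k + d.Cpd n * w.pd n k) * d.delta
          + d.Cns * w.ens k) :=
          Finset.sum_congr rfl fun t ht => by rw [c.cidx_eq hk ht]
      _ = (c.Tk k : ℝ) * (∑ n : N,
            (d.Cpc n * w.pc n k + d.Cpd n * w.pd n k) * d.delta
          + d.Cns * w.ens k) := by
          rw [Finset.sum_const, c.card_cluster, nsmul_eq_mul]
  rw [Finset.sum_congr rfl h1, Finset.sum_congr rfl h2, add_assoc,
    ← Finset.sum_add_distrib]
  congr 1
  exact Finset.sum_congr rfl fun k _ => by ring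

/-- Exact temporal aggregation under cluster-constant inputs: if the
input time series are constant within each cluster (F_{g,t} = F̂_{g,k} and D_t = D̂_k
on cluster k) and the last cluster is a singleton, then the optimal objective values
of the full-scale and temporally aggregated GEP models coincide: Ĵ(ẑ*) = J(z*). -/
theorem exact_temporal_aggregation
    {G N : Type} [Fintype G] [Fintype N] (d : GEPData G N) (T K : ℕ)
    (hT : 1 ≤ T) (hK : 1 ≤ K) (hdelta : 0 < d.delta) (hTn : ∀ n, 0 < d.Tn n)
    (hXg : ∀ g, d.Xgl g ≤ d.Xgu g) (hXs : ∀ n, d.Xsl n ≤ d.Xsu n)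
    (c : ConsecClustering T K)
    (hF : ∀ g, ∀ k < K, ∀ t ∈ c.cluster k, d.F g t = Fhat d c g k)
    (hD : ∀ k < K, ∀ t ∈ c.cluster k, d.D t = Dhat d c k)
    (hlast : c.Tk (K - 1) = 1)
    (zstar : GEPVars G N) (hzstar : Feasible d T zstar)
    (hzopt : ∀ z, Feasible d T z → objJ d T zstar ≤ objJ d T z)
    (what : GEPVars G N) (hwhat : AggFeasible d c what)
    (hwopt : ∀ w, AggFeasible d c w → objJagg d c what ≤ objJagg d c w) :
    objJagg d c what = objJ d T zstar := by
  apply le_antisymm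
  · calc objJagg d c what
        ≤ objJagg d c (aggregate c zstar) :=
          hwopt _ (agg_feasible d hdelta hTn c hF hD zstar hzstar)
      _ = objJ d T zstar := agg_obj d c zstar
  · calc objJ d T zstar
        ≤ objJ d T (disagg d c what) :=
          hzopt _ (disagg_feasible d hK c hF hD hlast what hwhat)
      _ = objJagg d c what := disagg_obj d c what
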